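/- Let K be a field and let v = (v_1,…,v_n), w = (w_1,…,w_n) ∈ K^n. There exist a permutation σ of {1,…,n} and a scalar λ ∈ K∖{0} such that w = λ·(σ*v) if and only if there exists c ∈ K∖{0} such that q_i(w) = c^{n−i}·q_i(v) for all i = 0,…,n. -/
import Mathlib


open Polynomial

private lemma prod_as_multiset {K : Type*} [CommRing K] {n : ℕ} (f : Fin n → K) :
    ∏ j : Fin n, (X - C (f j)) =
      ((Finset.univ.val.map f).map (fun t => X - C t)).prod := by
  rw [Finset.prod_eq_multiset_prod, Multiset.map_map]
  rfl

private lemma coeff_prod_scaled {K : Type*} [CommRing K] {n : ℕ} (v : Fin n → K) (c : K)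
    {i : ℕ} (h : i ≤ n) :
    (∏ j : Fin n, (X - C (c * v j))).coeff i =
      c ^ (n - i) * (∏ j : Fin n, (X - C (v j))).coeff i := by
  have hcard : Multiset.card (Finset.univ.val.map v) = n := by simp
  have hcard' : Multiset.card (Finset.univ.val.map (fun j => c * v j)) = n := by simp
  rw [prod_as_multiset, prod_as_multiset,
    Multiset.prod_X_sub_C_coeff _ (by simpa using h),
    Multiset.prod_X_sub_C_coeff _ (by simpa using h), hcard, hcard']
  have hmap : Finset.univ.val.map (fun j => c * v j)
      = (Finset.univ.val.map v).map (c • ·) := by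
    rw [Multiset.map_map]
    simp [Function.comp, smul_eq_mul]
  rw [hmap, ← Multiset.pow_smul_esymm, smul_eq_mul]
  ring

private lemma exists_perm_of_map_eq {α : Type*} {n : ℕ} {w u : Fin n → α}
    (h : Finset.univ.val.map w = Finset.univ.val.map u) :
    ∃ σ : Equiv.Perm (Fin n), w = fun i => u (σ i) := by
  classical
  have hc : ∀ a, Fintype.card {i // w i = a} = Fintype.card {i // u i = a} := by
    intro a
    have := congrArg (Multiset.count a) h
    simp only [Multiset.count_map] at this
    rw [Fintype.card_subtype, Fintype.card_subtype]
    simpa [Finset.filter, Finset.card, eq_comm] using this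
  refine ⟨Equiv.ofFiberEquiv (fun a => Fintype.equivOfCardEq (hc a)), funext fun i => ?_⟩
  exact (Equiv.ofFiberEquiv_map _ i).symm

/-- For `v w : Fin n → K`, there exist a permutation `σ` and a
nonzero scalar `λ` with `w = λ • (σ * v)` (where `(σ * v) i = v (σ i)`) iff
there is `c ≠ 0` with `q_i(w) = c^(n-i) * q_i(v)` for all `i = 0, …, n`, where
`q_i(v)` is the coefficient of `T^i` in `Q_v(T) = ∏ (T - v i)`. -/
theorem proj_perm_iff_coeff_scaled {K : Type*} [Field K] {n : ℕ} (v w : Fin n → K) :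
    (∃ (σ : Equiv.Perm (Fin n)) (lam : K), lam ≠ 0 ∧ w = fun i => lam * v (σ i)) ↔
      (∃ c : K, c ≠ 0 ∧ ∀ i ≤ n,
        (∏ j : Fin n, (X - C (w j))).coeff i =
          c ^ (n - i) * (∏ j : Fin n, (X - C (v j))).coeff i) := by
  constructor
  · rintro ⟨σ, lam, hlam, rfl⟩
    refine ⟨lam, hlam, fun i hi => ?_⟩
    have : ∏ j : Fin n, (X - C (lam * v (σ j))) = ∏ j : Fin n, (X - C (lam * v j)) :=
      Equiv.prod_comp σ (fun j => X - C (lam * v j))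
    rw [this, coeff_prod_scaled v lam hi]
  · rintro ⟨c, hc, h⟩
    have hdeg : ∀ f : Fin n → K, (∏ j : Fin n, (X - C (f j))).natDegree ≤ n := by
      intro f
      refine le_trans (Polynomial.natDegree_prod_le _ _) ?_
      simp [Polynomial.natDegree_X_sub_C]
    have heq : ∏ j : Fin n, (X - C (w j)) = ∏ j : Fin n, (X - C (c * v j)) := by
      ext i
      by_cases hi : i ≤ n
      · rw [h i hi, coeff_prod_scaled v c hi]
      · rw [Polynomial.coeff_eq_zero_of_natDegree_lt
          (lt_of_le_of_lt (hdeg w) (lt_of_not_ge hi)),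
          Polynomial.coeff_eq_zero_of_natDegree_lt
          (lt_of_le_of_lt (hdeg _) (lt_of_not_ge hi))]
    have hroots : Finset.univ.val.map w = Finset.univ.val.map (fun j => c * v j) := by
      have h1 := Polynomial.roots_multiset_prod_X_sub_C (Finset.univ.val.map w)
      have h2 := Polynomial.roots_multiset_prod_X_sub_C
        (Finset.univ.val.map (fun j => c * v j))
      rw [← h1, ← h2, ← prod_as_multiset, ← prod_as_multiset, heq]
    obtain ⟨σ, hσ⟩ := exists_perm_of_map_eq hroots
    exact ⟨σ, c, hc, hσ⟩
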